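/- Let f : 𝔸 → 𝔸 be a conservative twist map whose linearization along an orbit admits an invariant field of half-lines δ_+ ⊆ T𝔸 with Df(δ_+) = δ_+ ∘ f and Dπ(δ_+) = ℝ_+ (δ_+ transverse to the vertical and oriented to the right). Then along this orbit, for all n ≥ 1, the slopes satisfy s_{−n} < s_{−n−1} < d_+ < s_{n+1} < s_n, where d_+ is the slope of δ_+ and s_k is the slope of G_k = Df^k(V ∘ f^{−k}). In particular the orbit lies in Green(f). -/

import Mathlib

noncomputable def crossP (u v : ℝ × ℝ) : ℝ := u.1 * v.2 - u.2 * v.1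

/-- image of the vertical vector at site `m` under `M j` based `j` steps back -/
noncomputable def GV (M : ℤ → ℤ → (ℝ × ℝ) ≃L[ℝ] (ℝ × ℝ)) (j m : ℤ) : ℝ × ℝ :=
  M j (m - j) ((0 : ℝ), (1 : ℝ))

lemma applyP (T : (ℝ × ℝ) →ₗ[ℝ] ℝ × ℝ) (u : ℝ × ℝ) :
    T u = (u.1 * (T (1,0)).1 + u.2 * (T (0,1)).1,
           u.1 * (T (1,0)).2 + u.2 * (T (0,1)).2) := by
  have hu : u = u.1 • ((1:ℝ),(0:ℝ)) + u.2 • ((0:ℝ),(1:ℝ)) := by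
    ext <;> simp
  conv_lhs => rw [hu]
  rw [map_add, map_smul, map_smul]
  ext <;> simp [mul_comm]

lemma detP (T : (ℝ × ℝ) →ₗ[ℝ] ℝ × ℝ) :
    T.det = (T (1,0)).1 * (T (0,1)).2 - (T (0,1)).1 * (T (1,0)).2 := by
  rw [← LinearMap.det_toMatrix (Module.Basis.finTwoProd ℝ), Matrix.det_fin_two]
  simp [LinearMap.toMatrix_apply, Module.Basis.finTwoProd]

lemma crossP_map (T : (ℝ × ℝ) →ₗ[ℝ] ℝ × ℝ) (u v : ℝ × ℝ) :
    crossP (T u) (T v) = T.det * crossP u v := by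
  rw [applyP T u, applyP T v, detP]
  simp only [crossP]
  ring

lemma slopeP {a b : ℝ × ℝ} (h1 : 0 < a.1 * b.1) (h2 : 0 < crossP a b) :
    a.2 / a.1 < b.2 / b.1 := by
  have ha : a.1 ≠ 0 := fun h => by simp [h] at h1
  have hb : b.1 ≠ 0 := fun h => by simp [h] at h1
  have key : b.2 / b.1 - a.2 / a.1 = crossP a b / (a.1 * b.1) := by
    field_simp [crossP]; simp only [crossP]; ring
  have := div_pos h2 h1
  linarith

theorem stmt18 (A : ℤ → (ℝ × ℝ) ≃L[ℝ] (ℝ × ℝ))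
    (hdet : ∀ n : ℤ, LinearMap.det ((A n).toLinearEquiv.toLinearMap) = 1)
    (htwist : ∀ n : ℤ, 0 < (A n ((0 : ℝ), (1 : ℝ))).1)
    (M : ℤ → ℤ → (ℝ × ℝ) ≃L[ℝ] (ℝ × ℝ))
    (hM0 : ∀ n : ℤ, M 0 n = ContinuousLinearEquiv.refl ℝ (ℝ × ℝ))
    (hMrec : ∀ k n : ℤ, M (k + 1) n = (M k n).trans (A (n + k)))
    (d : ℤ → ℝ)
    (hd : ∀ n : ℤ, ∃ c : ℝ, 0 < c ∧ A n ((1 : ℝ), d n) = c • ((1 : ℝ), d (n + 1))) :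
    ∀ n k : ℤ, 1 ≤ k →
      (M k (n - k) ((0 : ℝ), (1 : ℝ))).1 ≠ 0 ∧
      (M (-k) (n + k) ((0 : ℝ), (1 : ℝ))).1 ≠ 0 ∧
      ((fun j : ℤ => (M j (n - j) ((0 : ℝ), (1 : ℝ))).2 /
          (M j (n - j) ((0 : ℝ), (1 : ℝ))).1) (-k) <
        (fun j : ℤ => (M j (n - j) ((0 : ℝ), (1 : ℝ))).2 /
          (M j (n - j) ((0 : ℝ), (1 : ℝ))).1) (-(k + 1)) ∧
       (fun j : ℤ => (M j (n - j) ((0 : ℝ), (1 : ℝ))).2 /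
          (M j (n - j) ((0 : ℝ), (1 : ℝ))).1) (-(k + 1)) < d n ∧
       d n < (fun j : ℤ => (M j (n - j) ((0 : ℝ), (1 : ℝ))).2 /
          (M j (n - j) ((0 : ℝ), (1 : ℝ))).1) (k + 1) ∧
       (fun j : ℤ => (M j (n - j) ((0 : ℝ), (1 : ℝ))).2 /
          (M j (n - j) ((0 : ℝ), (1 : ℝ))).1) (k + 1) <
        (fun j : ℤ => (M j (n - j) ((0 : ℝ), (1 : ℝ))).2 /
          (M j (n - j) ((0 : ℝ), (1 : ℝ))).1) k) := by
  -- cross-product preservation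
  have hcA : ∀ (m : ℤ) (x y : ℝ × ℝ), crossP (A m x) (A m y) = crossP x y := by
    intro m x y
    have h := crossP_map ((A m).toLinearEquiv.toLinearMap) x y
    rw [hdet m, one_mul] at h
    exact h
  -- the basic cone computation
  have comp : ∀ (m : ℤ) (w : ℝ × ℝ), ∃ c p r : ℝ, 0 < c ∧ 0 < p ∧ 0 < r ∧
      (A m w).1 = w.1 * c + (w.2 - d m * w.1) * p ∧
      (A m w).2 - d (m+1) * (A m w).1 = (w.2 - d m * w.1) * r := by
    intro m w
    obtain ⟨c, hc, hAc⟩ := hd m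
    have hcr : crossP (A m ((1:ℝ), d m)) (A m ((0:ℝ),(1:ℝ))) = 1 := by
      rw [hcA]; simp [crossP]
    rw [hAc] at hcr
    have hq : c * ((A m ((0:ℝ),(1:ℝ))).2 - d (m+1) * (A m ((0:ℝ),(1:ℝ))).1) = 1 := by
      simp only [crossP, Prod.smul_fst, Prod.smul_snd, smul_eq_mul] at hcr
      linear_combination hcr
    have hrpos : 0 < (A m ((0:ℝ),(1:ℝ))).2 - d (m+1) * (A m ((0:ℝ),(1:ℝ))).1 := by
      nlinarith
    have hw : A m w = w.1 • (A m ((1:ℝ), d m)) + (w.2 - d m * w.1) • (A m ((0:ℝ),(1:ℝ))) := by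
      conv_lhs => rw [show w = w.1 • ((1:ℝ), d m) + (w.2 - d m * w.1) • ((0:ℝ),(1:ℝ)) from by
        ext <;> simp <;> ring]
      rw [map_add, map_smul, map_smul]
    rw [hAc] at hw
    refine ⟨c, (A m ((0:ℝ),(1:ℝ))).1, _, hc, htwist m, hrpos, ?_, ?_⟩
    · rw [hw]
      simp only [Prod.fst_add, Prod.snd_add, Prod.smul_fst, Prod.smul_snd, smul_eq_mul]
      ring
    · rw [hw]
      simp only [Prod.fst_add, Prod.snd_add, Prod.smul_fst, Prod.smul_snd, smul_eq_mul]
      ring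
  -- forward step: the cone strictly right of δ₊ is preserved
  have stepA : ∀ (m : ℤ) (w : ℝ × ℝ), 0 ≤ w.1 → d m * w.1 < w.2 →
      0 < (A m w).1 ∧ d (m+1) * (A m w).1 < (A m w).2 := by
    intro m w h1 h2
    obtain ⟨c, p, r, hc, hp, hr, e1, e2⟩ := comp m w
    have hb : 0 < w.2 - d m * w.1 := by linarith
    constructor
    · rw [e1]
      have := mul_nonneg h1 hc.le
      have := mul_pos hb hp
      linarith
    · have := mul_pos hb hr
      linarith
  -- backward step for the inverse
  have stepB : ∀ (m : ℤ) (w : ℝ × ℝ), w.1 ≤ 0 → d (m+1) * w.1 < w.2 →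
      ((A m).symm w).1 < 0 ∧ d m * ((A m).symm w).1 < ((A m).symm w).2 := by
    intro m w h1 h2
    obtain ⟨c, p, r, hc, hp, hr, e1, e2⟩ := comp m ((A m).symm w)
    rw [(A m).apply_symm_apply] at e1 e2
    have hbr : 0 < (((A m).symm w).2 - d m * ((A m).symm w).1) * r := by
      rw [← e2]; linarith
    have hb : 0 < ((A m).symm w).2 - d m * ((A m).symm w).1 := by
      by_contra h
      push_neg at h
      nlinarith
    have hxc : ((A m).symm w).1 * c < 0 := by
      have := mul_pos hb hp
      linarith
    have hx : ((A m).symm w).1 < 0 := by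
      by_contra h
      push_neg at h
      have := mul_nonneg h hc.le
      linarith
    exact ⟨hx, by linarith⟩
  -- basic recursions for GV
  have hu0 : ∀ m : ℤ, GV M 0 m = ((0:ℝ),(1:ℝ)) := by
    intro m
    unfold GV
    rw [hM0]
    simp
  have hurec : ∀ j m : ℤ, GV M (j+1) m = A (m-1) (GV M j (m-1)) := by
    intro j m
    unfold GV
    have e1 : m - (j+1) = m - 1 - j := by ring
    rw [e1, hMrec j (m - 1 - j), show m - 1 - j + j = m - 1 from by ring]
    rfl
  have hurecB : ∀ j m : ℤ, GV M j m = (A m).symm (GV M (j+1) (m+1)) := by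
    intro j m
    have h := hurec j (m+1)
    rw [show m + 1 - 1 = m from by ring] at h
    rw [h, ContinuousLinearEquiv.symm_apply_apply]
  -- forward cone invariance
  have coneA : ∀ k : ℤ, 1 ≤ k → ∀ m : ℤ,
      0 < (GV M k m).1 ∧ d m * (GV M k m).1 < (GV M k m).2 := by
    refine Int.le_induction ?_ ?_
    · intro m
      have h1 : GV M 1 m = A (m-1) ((0:ℝ),(1:ℝ)) := by
        have h := hurec 0 m
        rw [hu0] at h
        norm_num at h
        exact h
      have h := stepA (m-1) ((0:ℝ),(1:ℝ)) (by norm_num) (by norm_num)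
      rw [show m - 1 + 1 = m from by ring] at h
      rw [h1]
      exact h
    · intro k hk ih m
      have h := stepA (m-1) (GV M k (m-1)) (ih (m-1)).1.le (ih (m-1)).2
      rw [show m - 1 + 1 = m from by ring] at h
      rw [hurec k m]
      exact h
  -- backward cone invariance
  have coneB : ∀ k : ℤ, 1 ≤ k → ∀ m : ℤ,
      (GV M (-k) m).1 < 0 ∧ d m * (GV M (-k) m).1 < (GV M (-k) m).2 := by
    refine Int.le_induction ?_ ?_
    · intro m
      have h1 : GV M (-1) m = (A m).symm ((0:ℝ),(1:ℝ)) := by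
        have h := hurecB (-1) m
        norm_num at h
        rw [hu0] at h
        exact h
      have h := stepB m ((0:ℝ),(1:ℝ)) (by norm_num) (by norm_num)
      rw [h1]
      exact h
    · intro k hk ih m
      have h := stepB m (GV M (-k) (m+1)) (ih (m+1)).1.le (ih (m+1)).2
      have h1 : GV M (-(k+1)) m = (A m).symm (GV M (-k) (m+1)) := by
        have h2 := hurecB (-(k+1)) m
        rw [show -(k+1) + 1 = -k from by ring] at h2
        exact h2
      rw [h1]
      exact h
  -- cross-product recursion
  have crossRec : ∀ j m : ℤ, crossP (GV M (j+1) m) (GV M j m)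
      = crossP (GV M j (m-1)) (GV M (j-1) (m-1)) := by
    intro j m
    have h2 : GV M j m = A (m-1) (GV M (j-1) (m-1)) := by
      have h := hurec (j-1) m
      rw [show j - 1 + 1 = j from by ring] at h
      exact h
    rw [hurec j m, h2, hcA]
  -- monotone slopes forward
  have crossA : ∀ k : ℤ, 0 ≤ k → ∀ m : ℤ, 0 < crossP (GV M (k+1) m) (GV M k m) := by
    refine Int.le_induction ?_ ?_
    · intro m
      have h := (coneA 1 le_rfl m).1
      rw [hu0]
      norm_num
      simpa [crossP] using h
    · intro k hk ih m
      have h := crossRec (k+1) m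
      rw [show k + 1 - 1 = k from by ring] at h
      rw [h]
      exact ih (m-1)
  -- monotone slopes backward
  have crossB : ∀ k : ℤ, 0 ≤ k → ∀ m : ℤ,
      0 < crossP (GV M (-k) m) (GV M (-(k+1)) m) := by
    refine Int.le_induction ?_ ?_
    · intro m
      have h := (coneB 1 le_rfl m).1
      rw [show -(0:ℤ) = 0 from by norm_num, hu0, show -((0:ℤ)+1) = -1 from by norm_num]
      simp only [crossP]
      norm_num
      linarith
    · intro k hk ih m
      have h := crossRec (-(k+1)) (m+1)
      rw [show m + 1 - 1 = m from by ring, show -(k+1) + 1 = -k from by ring,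
          show -(k+1) - 1 = -(k+1+1) from by ring] at h
      rw [← h]
      exact ih (m+1)
  -- assembly
  intro n k hk
  have hk1 : (1:ℤ) ≤ k + 1 := by linarith
  refine ⟨?_, ?_, ?_, ?_, ?_, ?_⟩
  · exact ne_of_gt (coneA k hk n).1
  · rw [show n + k = n - -k from by ring]
    exact ne_of_lt (coneB k hk n).1
  · exact slopeP (mul_pos_of_neg_of_neg (coneB k hk n).1 (coneB (k+1) hk1 n).1)
      (crossB k (by linarith) n)
  · exact (div_lt_iff_of_neg (coneB (k+1) hk1 n).1).2 (coneB (k+1) hk1 n).2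
  · exact (lt_div_iff₀ (coneA (k+1) hk1 n).1).2 (coneA (k+1) hk1 n).2
  · exact slopeP (mul_pos (coneA (k+1) hk1 n).1 (coneA k hk n).1)
      (crossA k (by linarith) n)
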